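/- Let A be a finite two-sided skew brace. If the additive group A_⊕ is solvable, then the multiplicative group A_⊙ is solvable. -/

import Mathlib

universe u

section
variable {A : Type u} [AddGroup A] [Group A]

private lemma sbA_mul_zero (hl : ∀ a b c : A, a * (b + c) = a * b + -a + a * c) :
    ∀ a : A, a * 0 = a := by
  intro a
  have h := hl a 0 0
  rw [add_zero] at h
  have h2 : a * 0 + 0 = a * 0 + (-a + a * 0) := by
    rw [add_zero, ← add_assoc]; exact h
  have h3 := add_left_cancel h2
  have h4 : a + 0 = a + (-a + a * 0) := by rw [← h3]
  rw [add_neg_cancel_left, add_zero] at h4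
  exact h4.symm

private lemma sbA_one_zero (hl : ∀ a b c : A, a * (b + c) = a * b + -a + a * c) :
    (1 : A) = 0 := by
  have h := sbA_mul_zero hl 1
  rw [one_mul] at h
  exact h.symm

private lemma sbA_zero_mul (hl : ∀ a b c : A, a * (b + c) = a * b + -a + a * c) :
    ∀ a : A, 0 * a = a := by
  intro a
  rw [← sbA_one_zero hl, one_mul]

private theorem subRed [Finite A]
    (hl : ∀ a b c : A, a * (b + c) = a * b + -a + a * c)
    (hr : ∀ a b c : A, (a + b) * c = a * c + -c + b * c)
    (hsolv : IsSolvable (Multiplicative A))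
    (IH : ∀ (B : Type u) [AddGroup B] [Group B] [Finite B],
      Nat.card B < Nat.card A →
      (∀ a b c : B, a * (b + c) = a * b + -a + a * c) →
      (∀ a b c : B, (a + b) * c = a * c + -c + b * c) →
      IsSolvable (Multiplicative B) → IsSolvable B)
    (N : AddSubgroup A) (hN : N.Normal)
    (hlam : ∀ a n, n ∈ N → -a + a * n ∈ N)
    (hrho : ∀ c n, n ∈ N → n * c + -c ∈ N)
    (hbot : N ≠ ⊥) (htop : N ≠ ⊤) : IsSolvable A := by
  haveI := hN
  have h10 : (1 : A) = 0 := sbA_one_zero hl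
  -- N is closed under the multiplicative structure
  have None : (1 : A) ∈ N := by rw [h10]; exact N.zero_mem
  have Nmul : ∀ a b : A, a ∈ N → b ∈ N → a * b ∈ N := by
    intro a b ha hb
    have : a * b = a + (-a + a * b) := (add_neg_cancel_left a (a*b)).symm
    rw [this]
    exact N.add_mem ha (hlam a b hb)
  have Ninv : ∀ a : A, a ∈ N → a⁻¹ ∈ N := by
    intro a ha
    have h1 : a⁻¹ + (-a⁻¹ + a⁻¹ * a) = 0 := by
      rw [add_neg_cancel_left, inv_mul_cancel, h10]
    have h2 : a⁻¹ = -(-a⁻¹ + a⁻¹ * a) := eq_neg_of_add_eq_zero_left h1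
    rw [h2]
    exact N.neg_mem (hlam a⁻¹ a ha)
  -- key computation for well-definedness of multiplication on the quotient
  have mulN : ∀ a b n m : A, n ∈ N → m ∈ N → ∃ k ∈ N, (a + n) * (b + m) = a * b + k := by
    intro a b n m hn hm
    refine ⟨(-a + a * m) + (-(b + m) + (n * (b + m) + -(b + m)) + -(-(b + m))), ?_, ?_⟩
    · exact N.add_mem (hlam a m hm) (hN.conj_mem _ (hrho (b+m) n hn) (-(b+m)))
    · rw [hr a n (b+m), hl a b m]
      simp [add_assoc]
  have invN : ∀ a n : A, n ∈ N → ∃ k ∈ N, (a + n)⁻¹ = a⁻¹ + k := by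
    intro a n hn
    -- λ_a is a bijection of N
    have hsurj : ∃ x, x ∈ N ∧ -a + a * x = n := by
      let f : ↥N → ↥N := fun x => ⟨-a + a * (x : A), hlam a x x.2⟩
      have hinj : Function.Injective f := by
        intro x y hxy
        have h1 : -a + a * (x:A) = -a + a * (y:A) := congrArg Subtype.val hxy
        have h2 : a * (x:A) = a * (y:A) := add_left_cancel h1
        exact Subtype.ext (mul_left_cancel h2)
      have hs := Finite.injective_iff_surjective.mp hinj
      obtain ⟨x, hx⟩ := hs ⟨n, hn⟩
      exact ⟨x, x.2, congrArg Subtype.val hx⟩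
    obtain ⟨x, hxN, hx⟩ := hsurj
    have hxinv : (x : A)⁻¹ ∈ N := Ninv x hxN
    have key : a + n = a * x := by rw [← hx, add_neg_cancel_left]
    refine ⟨-a⁻¹ + (x⁻¹ * a⁻¹ + -a⁻¹) + -(-a⁻¹), ?_, ?_⟩
    · exact hN.conj_mem _ (hrho a⁻¹ x⁻¹ hxinv) (-a⁻¹)
    · rw [key, mul_inv_rev]
      simp [add_assoc]

  -- the quotient Q = A / N with descended multiplicative structure
  have wdmul : ∀ a b : A, (QuotientAddGroup.leftRel N) a b →
      ∀ c d : A, (QuotientAddGroup.leftRel N) c d →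
      (QuotientAddGroup.leftRel N) (a * c) (b * d) := by
    intro a b hab c d hcd
    rw [QuotientAddGroup.leftRel_apply] at *
    obtain ⟨k, hk, hk2⟩ := mulN a c (-a + b) (-c + d) hab hcd
    rw [add_neg_cancel_left, add_neg_cancel_left] at hk2
    rw [hk2, neg_add_cancel_left]
    exact hk
  have wdinv : ∀ a b : A, (QuotientAddGroup.leftRel N) a b →
      (QuotientAddGroup.leftRel N) a⁻¹ b⁻¹ := by
    intro a b hab
    rw [QuotientAddGroup.leftRel_apply] at *
    obtain ⟨k, hk, hk2⟩ := invN a (-a + b) hab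
    rw [add_neg_cancel_left] at hk2
    rw [hk2, neg_add_cancel_left]
    exact hk
  letI qMul : Mul (A ⧸ N) := ⟨Quotient.map₂ (· * ·) wdmul⟩
  letI qOne : One (A ⧸ N) := ⟨QuotientAddGroup.mk 1⟩
  letI qInv : Inv (A ⧸ N) := ⟨Quotient.map (·⁻¹) wdinv⟩
  have mk_mul : ∀ a b : A, (QuotientAddGroup.mk a : A ⧸ N) * QuotientAddGroup.mk b
      = QuotientAddGroup.mk (a * b) := fun a b => rfl
  have mk_inv : ∀ a : A, (QuotientAddGroup.mk a : A ⧸ N)⁻¹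
      = QuotientAddGroup.mk a⁻¹ := fun a => rfl
  have mk_one : (1 : A ⧸ N) = QuotientAddGroup.mk 1 := rfl
  letI qGroup : Group (A ⧸ N) := Group.ofLeftAxioms
    (by
      intro x y z
      induction x using QuotientAddGroup.induction_on with | H a =>
      induction y using QuotientAddGroup.induction_on with | H b =>
      induction z using QuotientAddGroup.induction_on with | H c =>
      rw [mk_mul, mk_mul, mk_mul, mk_mul, mul_assoc])
    (by
      intro x
      induction x using QuotientAddGroup.induction_on with | H a =>
      rw [mk_one, mk_mul, one_mul])
    (by
      intro x
      induction x using QuotientAddGroup.induction_on with | H a =>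
      rw [mk_inv, mk_mul, inv_mul_cancel, mk_one])
  have qhl : ∀ a b c : A ⧸ N, a * (b + c) = a * b + -a + a * c := by
    intro x y z
    induction x using QuotientAddGroup.induction_on with | H a =>
    induction y using QuotientAddGroup.induction_on with | H b =>
    induction z using QuotientAddGroup.induction_on with | H c =>
    rw [← QuotientAddGroup.mk_add, mk_mul, mk_mul, mk_mul, ← QuotientAddGroup.mk_neg,
      ← QuotientAddGroup.mk_add, ← QuotientAddGroup.mk_add, hl]
  have qhr : ∀ a b c : A ⧸ N, (a + b) * c = a * c + -c + b * c := by
    intro x y z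
    induction x using QuotientAddGroup.induction_on with | H a =>
    induction y using QuotientAddGroup.induction_on with | H b =>
    induction z using QuotientAddGroup.induction_on with | H c =>
    rw [← QuotientAddGroup.mk_add, mk_mul, mk_mul, mk_mul, ← QuotientAddGroup.mk_neg,
      ← QuotientAddGroup.mk_add, ← QuotientAddGroup.mk_add, hr]
  -- Multiplicative (A ⧸ N) is solvable (quotient of additive group)
  haveI hsolv' : Group.IsSolvable (Multiplicative A) := hsolv
  haveI qMsolv : IsSolvable (Multiplicative (A ⧸ N)) := by
    let phi : Multiplicative A →* Multiplicative (A ⧸ N) :=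
      MonoidHom.mk' (fun a => Multiplicative.ofAdd (QuotientAddGroup.mk a.toAdd))
        (fun a b => congrArg Multiplicative.ofAdd (QuotientAddGroup.mk_add N _ _))
    have hphi : Function.Surjective phi := by
      intro x
      obtain ⟨a, ha⟩ := QuotientAddGroup.mk_surjective (Multiplicative.toAdd x)
      exact ⟨Multiplicative.ofAdd a, by simp [phi, ha]⟩
    exact solvable_of_surjective hphi
  -- cardinality of the quotient
  have hcards : Nat.card A = Nat.card (A ⧸ N) * Nat.card ↥N :=
    AddSubgroup.card_eq_card_quotient_mul_card_addSubgroup N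
  have hNnontriv : 1 < Nat.card ↥N := by
    have hnt : Nontrivial ↥N := ?_
    · exact Finite.one_lt_card
    obtain ⟨n, hn, hne⟩ : ∃ n ∈ N, n ≠ 0 := by
      by_contra hc
      push_neg at hc
      exact hbot (by
        ext x
        simp only [AddSubgroup.mem_bot]
        exact ⟨fun hx => hc x hx, fun hx => hx ▸ N.zero_mem⟩)
    exact ⟨⟨n, hn⟩, ⟨0, N.zero_mem⟩, by simpa [Subtype.ext_iff] using hne⟩
  have hQpos : 0 < Nat.card (A ⧸ N) := Nat.card_pos
  have hQcard : Nat.card (A ⧸ N) < Nat.card A := by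
    calc Nat.card (A ⧸ N) = Nat.card (A ⧸ N) * 1 := (mul_one _).symm
    _ < Nat.card (A ⧸ N) * Nat.card ↥N := by
        exact Nat.mul_lt_mul_of_pos_left hNnontriv hQpos
    _ = Nat.card A := hcards.symm
  have qSolv : IsSolvable (A ⧸ N) := IH (A ⧸ N) hQcard qhl qhr qMsolv
  -- the subgroup N as a skew brace
  letI tMul : Mul ↥N := ⟨fun a b => ⟨(a : A) * b, Nmul _ _ a.2 b.2⟩⟩
  letI tOne : One ↥N := ⟨⟨1, None⟩⟩
  letI tInv : Inv ↥N := ⟨fun a => ⟨(a : A)⁻¹, Ninv _ a.2⟩⟩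
  letI tGroup : Group ↥N := Group.ofLeftAxioms
    (fun a b c => Subtype.ext (mul_assoc (a:A) b c))
    (fun a => Subtype.ext (one_mul (a:A)))
    (fun a => Subtype.ext (inv_mul_cancel (a:A)))
  have thl : ∀ a b c : ↥N, a * (b + c) = a * b + -a + a * c :=
    fun a b c => Subtype.ext (hl a b c)
  have thr : ∀ a b c : ↥N, (a + b) * c = a * c + -c + b * c :=
    fun a b c => Subtype.ext (hr a b c)
  haveI tMsolv : IsSolvable (Multiplicative ↥N) := by
    let psi : Multiplicative ↥N →* Multiplicative A :=
      MonoidHom.mk' (fun x => Multiplicative.ofAdd ((x.toAdd : A)))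
        (fun a b => rfl)
    have hpsi : Function.Injective psi := by
      intro x y hxy
      exact Multiplicative.toAdd.injective (Subtype.ext (by
        simpa [psi] using hxy))
    exact solvable_of_solvable_injective hpsi
  have hTcard : Nat.card ↥N < Nat.card A := by
    have h1 : (N : Set A) ⊂ Set.univ := by
      rw [Set.ssubset_univ_iff]
      intro hc
      exact htop (by ext x; simp [← SetLike.mem_coe, hc])
    have h2 : Nat.card ↥N = (N : Set A).ncard := Nat.card_coe_set_eq _
    rw [h2, ← Set.ncard_univ A]
    exact Set.ncard_lt_ncard h1 Set.finite_univ
  have tSolv : IsSolvable ↥N := IH ↥N hTcard thl thr tMsolv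
  -- glue: N as a multiplicative subgroup
  let N' : Subgroup A :=
    { carrier := (N : Set A)
      mul_mem' := fun ha hb => Nmul _ _ ha hb
      one_mem' := None
      inv_mem' := fun ha => Ninv _ ha }
  haveI : Group.IsSolvable ↥N' := by
    let e : ↥N' →* ↥N :=
      MonoidHom.mk' (fun x => (⟨(x : A), x.2⟩ : ↥N)) (fun a b => Subtype.ext rfl)
    have he : Function.Injective e := by
      intro x y hxy
      exact Subtype.ext (congrArg Subtype.val hxy)
    haveI : Group.IsSolvable ↥N := tSolv
    exact solvable_of_solvable_injective he
  haveI : Group.IsSolvable (A ⧸ N) := qSolv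
  let g : A →* A ⧸ N := MonoidHom.mk' QuotientAddGroup.mk (fun a b => (mk_mul a b).symm)
  have hker : g.ker ≤ N'.subtype.range := by
    intro x hx
    rw [MonoidHom.mem_ker] at hx
    have hx0 : (QuotientAddGroup.mk x : A ⧸ N) = 0 := by
      rw [show (g x) = QuotientAddGroup.mk x from rfl] at hx
      rw [hx, mk_one, h10]
      rfl
    have hxN : x ∈ N := (QuotientAddGroup.eq_zero_iff x).mp hx0
    exact ⟨⟨x, hxN⟩, rfl⟩
  exact solvable_of_ker_le_range N'.subtype g hker
end



section AbCase
variable {A : Type u} [AddCommGroup A] [Group A]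

/-- The ring multiplication of the radical ring attached to a two-sided brace. -/
private def sbS (a b : A) : A := -a + a * b + -b

private lemma sbS_mul_zero' (hl : ∀ a b c : A, a * (b + c) = a * b + -a + a * c) :
    ∀ a : A, a * 0 = a := by
  intro a
  have h := hl a 0 0
  rw [add_zero] at h
  have h2 : a * 0 + 0 = a * 0 + (-a + a * 0) := by
    rw [add_zero, ← add_assoc]; exact h
  have h3 := add_left_cancel h2
  have h4 : a + 0 = a + (-a + a * 0) := by rw [← h3]
  rw [add_neg_cancel_left, add_zero] at h4
  exact h4.symm

private lemma sbS_zero_mul' (hl : ∀ a b c : A, a * (b + c) = a * b + -a + a * c) :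
    ∀ a : A, 0 * a = a := by
  intro a
  have h10 : (1 : A) = 0 := by
    have h := sbS_mul_zero' hl 1
    rw [one_mul] at h
    exact h.symm
  rw [← h10, one_mul]

private lemma sbS_add_right (hl : ∀ a b c : A, a * (b + c) = a * b + -a + a * c)
    (a b c : A) : sbS a (b + c) = sbS a b + sbS a c := by
  unfold sbS
  rw [hl]
  abel

private lemma sbS_add_left (hr : ∀ a b c : A, (a + b) * c = a * c + -c + b * c)
    (a b c : A) : sbS (a + b) c = sbS a c + sbS b c := by
  unfold sbS
  rw [hr]
  abel

private lemma sbS_zero_right (hl : ∀ a b c : A, a * (b + c) = a * b + -a + a * c)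
    (a : A) : sbS a 0 = 0 := by
  unfold sbS
  rw [sbS_mul_zero' hl]
  abel

private lemma sbS_zero_left (hl : ∀ a b c : A, a * (b + c) = a * b + -a + a * c)
    (a : A) : sbS 0 a = 0 := by
  unfold sbS
  rw [sbS_zero_mul' hl]
  abel

private lemma sbS_neg_right (hl : ∀ a b c : A, a * (b + c) = a * b + -a + a * c)
    (a b : A) : sbS a (-b) = -sbS a b := by
  have h := sbS_add_right hl a b (-b)
  rw [add_neg_cancel, sbS_zero_right hl] at h
  linear_combination (norm := abel) -h

private lemma sbS_neg_left (hl : ∀ a b c : A, a * (b + c) = a * b + -a + a * c)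
    (hr : ∀ a b c : A, (a + b) * c = a * c + -c + b * c)
    (a b : A) : sbS (-a) b = -sbS a b := by
  have h := sbS_add_left hr a (-a) b
  rw [add_neg_cancel, sbS_zero_left hl] at h
  linear_combination (norm := abel) -h

private lemma sbS_mul_eq (a b : A) : a * b = a + b + sbS a b := by
  unfold sbS
  abel

private lemma sbS_assoc (hl : ∀ a b c : A, a * (b + c) = a * b + -a + a * c)
    (hr : ∀ a b c : A, (a + b) * c = a * c + -c + b * c)
    (a b c : A) : sbS (sbS a b) c = sbS a (sbS b c) := by
  have k1 : sbS a (b * c) = sbS a b + sbS a c + sbS a (sbS b c) := by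
    rw [sbS_mul_eq b c, sbS_add_right hl, sbS_add_right hl]
  have k2 : sbS (a * b) c = sbS a c + sbS b c + sbS (sbS a b) c := by
    rw [sbS_mul_eq a b, sbS_add_left hr, sbS_add_left hr]
  have k3 : sbS (a * b) c + sbS a b = sbS a (b * c) + sbS b c := by
    unfold sbS
    rw [mul_assoc]
    abel
  rw [k1, k2] at k3
  linear_combination (norm := abel) k3

/-- The Nakayama-style cancellation: if `sbS e y = y` then `y = 0`. -/
private lemma sbS_nak_step (hl : ∀ a b c : A, a * (b + c) = a * b + -a + a * c)
    (hr : ∀ a b c : A, (a + b) * c = a * c + -c + b * c)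
    (e y : A) (h : sbS e y = y) : y = 0 := by
  set f : A := (-e)⁻¹ with hf
  have h10 : (1 : A) = 0 := by
    have h := sbS_mul_zero' hl 1
    rw [one_mul] at h
    exact h.symm
  have h1 : f * (-e) = 0 := by rw [hf, inv_mul_cancel, h10]
  have h2 : sbS f e = f - e := by
    have := sbS_mul_eq f (-e)
    rw [h1, sbS_neg_right hl] at this
    linear_combination (norm := abel) this
  have h3 : sbS f y = sbS f y - y := by
    calc sbS f y = sbS f (sbS e y) := by rw [h]
    _ = sbS (sbS f e) y := (sbS_assoc hl hr f e y).symm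
    _ = sbS (f - e) y := by rw [h2]
    _ = sbS f y - y := by
        rw [sub_eq_add_neg, sbS_add_left hr, sbS_neg_left hl hr, h]
        abel
  linear_combination (norm := abel) h3

/-- Nakayama: in a finite radical ring, if the products generate everything,
the ring is trivial. -/
private lemma sbS_nakayama [Finite A]
    (hl : ∀ a b c : A, a * (b + c) = a * b + -a + a * c)
    (hr : ∀ a b c : A, (a + b) * c = a * c + -c + b * c)
    (htop : AddSubgroup.closure {x : A | ∃ a b : A, x = sbS a b} = ⊤) :
    Subsingleton A := by
  by_contra hns
  have hnt : Nontrivial A := not_subsingleton_iff_nontrivial.mp hns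
  -- the collection of nonzero "left ideals" L with closure (A∗L) = L
  set P : AddSubgroup A → Prop := fun L =>
    L ≠ ⊥ ∧ AddSubgroup.closure {x : A | ∃ a : A, ∃ l ∈ L, x = sbS a l} = L with hP
  have hPtop : P ⊤ := by
    constructor
    · intro hc
      obtain ⟨x, y, hxy⟩ := hnt
      apply hxy
      have hx : x ∈ (⊤ : AddSubgroup A) := trivial
      have hy : y ∈ (⊤ : AddSubgroup A) := trivial
      rw [hc, AddSubgroup.mem_bot] at hx hy
      rw [hx, hy]
    · have hset : {x : A | ∃ a : A, ∃ l ∈ (⊤ : AddSubgroup A), x = sbS a l}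
          = {x : A | ∃ a b : A, x = sbS a b} := by
        ext x
        constructor
        · rintro ⟨a, l, -, hx⟩; exact ⟨a, l, hx⟩
        · rintro ⟨a, b, hx⟩; exact ⟨a, b, trivial, hx⟩
      rw [hset, htop]
  -- choose L with P L of minimal cardinality
  set T : Set ℕ := {k | ∃ L, P L ∧ Nat.card ↥L = k} with hT
  have hTne : T.Nonempty := ⟨_, ⊤, hPtop, rfl⟩
  obtain ⟨L, hPL, hLcard⟩ : ∃ L, P L ∧ Nat.card ↥L = sInf T := Nat.sInf_mem hTne
  have hmin : ∀ M, P M → sInf T ≤ Nat.card ↥M := fun M hM => Nat.sInf_le ⟨M, hM, rfl⟩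
  -- find y ∈ L with some sbS a y ≠ 0
  obtain ⟨y, hyL, a0, ha0⟩ : ∃ y ∈ L, ∃ a : A, sbS a y ≠ 0 := by
    by_contra hc
    push_neg at hc
    apply hPL.1
    rw [← hPL.2]
    rw [AddSubgroup.closure_eq_bot_iff]
    intro x hx
    obtain ⟨a, l, hl', hx⟩ := hx
    rw [Set.mem_singleton_iff, hx]
    exact hc l hl' a
  -- the left ideal M = A ∗ y
  let rho : A →+ A := AddMonoidHom.mk' (fun a => sbS a y) (fun a b => sbS_add_left hr a b y)
  set M : AddSubgroup A := rho.range with hM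
  have hMne : M ≠ ⊥ := by
    intro hc
    apply ha0
    have : sbS a0 y ∈ M := ⟨a0, rfl⟩
    rwa [hc, AddSubgroup.mem_bot] at this
  have hML : M ≤ L := by
    rintro x ⟨a, rfl⟩
    rw [← hPL.2]
    exact AddSubgroup.subset_closure ⟨a, y, hyL, rfl⟩
  have hPM : P M := by
    constructor
    · exact hMne
    · apply le_antisymm
      · rw [AddSubgroup.closure_le]
        rintro x ⟨a, m, ⟨b, rfl⟩, rfl⟩
        exact ⟨sbS a b, sbS_assoc hl hr a b y⟩
      · rintro x ⟨a, rfl⟩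
        show sbS a y ∈ _
        have haT : a ∈ AddSubgroup.closure {x : A | ∃ a b : A, x = sbS a b} := by
          rw [htop]; trivial
        induction haT using AddSubgroup.closure_induction with
        | mem u hu =>
          obtain ⟨p, q, rfl⟩ := hu
          apply AddSubgroup.subset_closure
          exact ⟨p, sbS q y, ⟨q, rfl⟩, sbS_assoc hl hr p q y⟩
        | zero =>
          rw [show sbS (0:A) y = 0 from sbS_zero_left hl y]
          exact AddSubgroup.zero_mem _
        | add u v hu hv hu' hv' =>
          rw [sbS_add_left hr]
          exact AddSubgroup.add_mem _ hu' hv'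
        | neg u hu hu' =>
          rw [sbS_neg_left hl hr]
          exact AddSubgroup.neg_mem _ hu'
  -- minimality forces M = L
  have hMLeq : M = L := by
    have h1 : (M : Set A) ⊆ (L : Set A) := hML
    have h2 : Nat.card ↥L ≤ Nat.card ↥M := hLcard ▸ hmin M hPM
    have h3 : (L : Set A).ncard ≤ (M : Set A).ncard := by
      rwa [← Nat.card_coe_set_eq, ← Nat.card_coe_set_eq]
    have := Set.eq_of_subset_of_ncard_le h1 h3 (Set.toFinite _)
    exact SetLike.coe_injective this
  -- now y ∈ L = M, so y = sbS e y for some e, hence y = 0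
  obtain ⟨e, he⟩ : ∃ e : A, sbS e y = y := by
    have : y ∈ M := hMLeq ▸ hyL
    obtain ⟨e, he⟩ := this
    exact ⟨e, he⟩
  have hy0 : y = 0 := sbS_nak_step hl hr e y he
  apply ha0
  rw [hy0, sbS_zero_right hl]
end AbCase



private theorem sbAux (n : ℕ) : ∀ (A : Type u) [AddGroup A] [Group A] [Finite A],
    Nat.card A < n →
    (∀ a b c : A, a * (b + c) = a * b + -a + a * c) →
    (∀ a b c : A, (a + b) * c = a * c + -c + b * c) →
    IsSolvable (Multiplicative A) → IsSolvable A := by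
  induction n with
  | zero => intro A _ _ _ h; exact absurd h (Nat.not_lt_zero _)
  | succ n ihn =>
    intro A _ _ _ hcard hl hr hsolv
    have IH : ∀ (B : Type u) [AddGroup B] [Group B] [Finite B],
        Nat.card B < Nat.card A →
        (∀ a b c : B, a * (b + c) = a * b + -a + a * c) →
        (∀ a b c : B, (a + b) * c = a * c + -c + b * c) →
        IsSolvable (Multiplicative B) → IsSolvable B := by
      intro B _ _ _ hB
      exact ihn B (lt_of_lt_of_le hB (Nat.lt_succ_iff.mp hcard))
    by_cases hs : Subsingleton A
    · exact isSolvable_of_comm fun a b => Subsingleton.elim _ _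
    have hnt : Nontrivial A := not_subsingleton_iff_nontrivial.mp hs
    by_cases hab : ∀ x y : A, x + y = y + x
    · -- additive group abelian: radical ring case
      letI acg : AddCommGroup A := { (inferInstance : AddGroup A) with add_comm := hab }
      set I : AddSubgroup A := AddSubgroup.closure {x : A | ∃ a b : A, x = sbS a b} with hI
      by_cases hItop : I = ⊤
      · exact absurd (sbS_nakayama hl hr hItop) hs
      by_cases hIbot : I = ⊥
      · -- all products are zero: the two operations coincide, multiplication commutative
        apply isSolvable_of_comm
        intro x y
        have hz : ∀ a b : A, sbS a b = 0 := by
          intro a b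
          have : sbS a b ∈ I := AddSubgroup.subset_closure ⟨a, b, rfl⟩
          rwa [hIbot, AddSubgroup.mem_bot] at this
        rw [sbS_mul_eq x y, sbS_mul_eq y x, hz, hz, add_zero, add_zero]
        exact hab x y
      · -- I is a proper nontrivial ideal
        have hclosed : ∀ a : A, ∀ m ∈ I, sbS a m ∈ I := by
          intro a m hm
          induction hm using AddSubgroup.closure_induction with
          | mem u hu =>
            obtain ⟨p, q, rfl⟩ := hu
            rw [← sbS_assoc hl hr]
            exact AddSubgroup.subset_closure ⟨sbS a p, q, rfl⟩
          | zero => rw [sbS_zero_right hl]; exact AddSubgroup.zero_mem _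
          | add u v _ _ hu' hv' =>
            rw [sbS_add_right hl]; exact AddSubgroup.add_mem _ hu' hv'
          | neg u _ hu' =>
            rw [sbS_neg_right hl]; exact AddSubgroup.neg_mem _ hu'
        have hclosedL : ∀ c : A, ∀ m ∈ I, sbS m c ∈ I := by
          intro c m hm
          induction hm using AddSubgroup.closure_induction with
          | mem u hu =>
            obtain ⟨p, q, rfl⟩ := hu
            rw [sbS_assoc hl hr]
            exact AddSubgroup.subset_closure ⟨p, sbS q c, rfl⟩
          | zero => rw [sbS_zero_left hl]; exact AddSubgroup.zero_mem _
          | add u v _ _ hu' hv' =>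
            rw [sbS_add_left hr]; exact AddSubgroup.add_mem _ hu' hv'
          | neg u _ hu' =>
            rw [sbS_neg_left hl hr]; exact AddSubgroup.neg_mem _ hu'
        have hNormal : I.Normal := by
          constructor
          intro m hm g
          have : g + m + -g = m := by abel
          rwa [this]
        have hlamI : ∀ a m : A, m ∈ I → -a + a * m ∈ I := by
          intro a m hm
          have h1 : -a + a * m = sbS a m + m := by
            rw [sbS_mul_eq a m]; abel
          rw [h1]
          exact AddSubgroup.add_mem _ (hclosed a m hm) hm
        have hrhoI : ∀ c m : A, m ∈ I → m * c + -c ∈ I := by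
          intro c m hm
          have h1 : m * c + -c = sbS m c + m := by
            rw [sbS_mul_eq m c]; abel
          rw [h1]
          exact AddSubgroup.add_mem _ (hclosedL c m hm) hm
        exact subRed hl hr hsolv IH I hNormal hlamI hrhoI hIbot hItop
    · -- nonabelian additive group: use the additive derived subgroup
      push_neg at hab
      obtain ⟨x0, y0, hxy0⟩ := hab
      set S : Set A := {x : A | ∃ a b : A, x = -a + -b + a + b} with hS
      set N : AddSubgroup A := AddSubgroup.closure S with hN
      -- any additive endomorphism preserves N
      have endo : ∀ (f : A →+ A), ∀ m ∈ N, f m ∈ N := by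
        intro f m hm
        induction hm using AddSubgroup.closure_induction with
        | mem u hu =>
          obtain ⟨a, b, rfl⟩ := hu
          apply AddSubgroup.subset_closure
          exact ⟨f a, f b, by simp [map_add, map_neg]⟩
        | zero => rw [map_zero]; exact AddSubgroup.zero_mem _
        | add u v _ _ hu' hv' => rw [map_add]; exact AddSubgroup.add_mem _ hu' hv'
        | neg u _ hu' => rw [map_neg]; exact AddSubgroup.neg_mem _ hu'
      have hNormal : N.Normal := by
        constructor
        intro m hm g
        let f : A →+ A := AddMonoidHom.mk' (fun x => g + x + -g) (by
          intro a b
          show g + (a + b) + -g = (g + a + -g) + (g + b + -g)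
          simp [add_assoc])
        exact endo f m hm
      have hlamN : ∀ a m : A, m ∈ N → -a + a * m ∈ N := by
        intro a m hm
        let f : A →+ A := AddMonoidHom.mk' (fun b => -a + a * b) (by
          intro b c
          show -a + a * (b + c) = (-a + a * b) + (-a + a * c)
          rw [hl]
          simp [add_assoc])
        exact endo f m hm
      have hrhoN : ∀ c m : A, m ∈ N → m * c + -c ∈ N := by
        intro c m hm
        let f : A →+ A := AddMonoidHom.mk' (fun x => x * c + -c) (by
          intro a b
          show (a + b) * c + -c = (a * c + -c) + (b * c + -c)
          rw [hr]
          simp [add_assoc])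
        exact endo f m hm
      have hbot : N ≠ ⊥ := by
        intro hc
        apply hxy0
        have hz : -x0 + -y0 + x0 + y0 ∈ N := AddSubgroup.subset_closure ⟨x0, y0, rfl⟩
        rw [hc, AddSubgroup.mem_bot] at hz
        have h1 : (-x0 + -y0) + (x0 + y0) = 0 := by rw [← add_assoc]; exact hz
        have h2 := neg_eq_of_add_eq_zero_left h1
        have h3 := congrArg Neg.neg h2
        rw [neg_neg, neg_add_rev, neg_neg, neg_neg] at h3
        exact h3
      have htop : N ≠ ⊤ := by
        intro hc
        -- then the commutator subgroup of Multiplicative A is everything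
        have hcomm : ∀ x : A, Multiplicative.ofAdd x ∈
            ⁅(⊤ : Subgroup (Multiplicative A)), (⊤ : Subgroup (Multiplicative A))⁆ := by
          intro x
          have hx : x ∈ N := by rw [hc]; trivial
          induction hx using AddSubgroup.closure_induction with
          | mem u hu =>
            obtain ⟨a, b, rfl⟩ := hu
            open scoped commutatorElement in
            have : Multiplicative.ofAdd (-a + -b + a + b) =
                ⁅Multiplicative.ofAdd (-a), Multiplicative.ofAdd (-b)⁆ := by
              simp only [commutatorElement_def, ← ofAdd_neg, ← ofAdd_add, neg_neg]
            rw [this]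
            exact Subgroup.commutator_mem_commutator (Subgroup.mem_top _) (Subgroup.mem_top _)
          | zero => exact one_mem _
          | add u v _ _ hu' hv' => exact mul_mem hu' hv'
          | neg u _ hu' => exact inv_mem hu'
        have hds : ∀ k : ℕ, derivedSeries (Multiplicative A) k = ⊤ := by
          intro k
          induction k with
          | zero => rfl
          | succ k ihk =>
            rw [derivedSeries_succ, ihk]
            exact eq_top_iff.mpr (fun x _ => by
              simpa using hcomm (Multiplicative.toAdd x))
        obtain ⟨k, hk⟩ := hsolv.solvable
        rw [hds k] at hk
        obtain ⟨x, y, hxy⟩ := hnt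
        apply hxy
        have hx : Multiplicative.ofAdd x ∈ (⊤ : Subgroup (Multiplicative A)) := trivial
        have hy : Multiplicative.ofAdd y ∈ (⊤ : Subgroup (Multiplicative A)) := trivial
        rw [hk, Subgroup.mem_bot] at hx hy
        have : Multiplicative.ofAdd x = Multiplicative.ofAdd y := by rw [hx, hy]
        exact Multiplicative.ofAdd.injective this
      exact subRed hl hr hsolv IH N hNormal hlamN hrhoN hbot htop


/-- If the additive group of a finite two-sided skew brace is solvable, then so is its
multiplicative group. -/
theorem finite_two_sided_skew_brace_add_solvable_imp_mul_solvable
    (A : Type*) [AddGroup A] [Group A] [Finite A]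
    (hl : ∀ a b c : A, a * (b + c) = a * b + -a + a * c)
    (hr : ∀ a b c : A, (a + b) * c = a * c + -c + b * c)
    (hsolv : IsSolvable (Multiplicative A)) :
    IsSolvable A :=
  sbAux (Nat.card A + 1) A (Nat.lt_succ_self _) hl hr hsolv
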